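/- (Unbiasedness of the intervention-oblivious estimator.) Consider T timesteps with logging policies π_1, …, π_T (possibly all distinct, i.e., online interventions may occur). Assume that for every timestep t, every query q, and every item d ∈ D_q, the expected bias parameter E_ȳ[α_d | π_t, q] is nonzero. Then the expected value of the estimated reward R̂_IO(π | D) = (1/T) Σ_{t=1}^T Σ_{d ∈ D_{q_t}} λ(d | q_t) · (c_t(d) − E_ȳ[β_d | π_t, q_t]) / E_ȳ[α_d | π_t, q_t], taken over the i.i.d. queries q_t ~ P(q), the displayed rankings ȳ_t ~ π_t(· | q_t), and the clicks c_t, equals the true reward R(π) = Σ_q P(q) Σ_{d ∈ D_q} λ(d | q) · r(d, q). -/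

import Mathlib

open Finset

lemma IO_sum_prod_pi {ι X : Type*} [Fintype ι] [DecidableEq ι] [Fintype X]
    (g : ι → X → ℝ) :
    ∑ xs : ι → X, ∏ i, g i (xs i) = ∏ i, ∑ x, g i x :=
  (Fintype.prod_sum g).symm

lemma IO_key {ι X : Type*} [Fintype ι] [DecidableEq ι] [Fintype X]
    (w : ι → X → ℝ) (hw : ∀ i, ∑ x, w i x = 1) (s : Finset ι) (f : ι → X → ℝ) :
    ∑ xs : ι → X, (∏ i, w i (xs i)) * ∑ i ∈ s, f i (xs i)
      = ∑ i ∈ s, ∑ x, w i x * f i x := by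
  simp_rw [Finset.mul_sum]
  rw [Finset.sum_comm]
  refine Finset.sum_congr rfl fun i _ => ?_
  have h1 : ∀ xs : ι → X,
      (∏ j, w j (xs j)) * f i (xs i)
        = ∏ j, (if j = i then w j (xs j) * f i (xs j) else w j (xs j)) := by
    intro xs
    rw [show (∏ j, w j (xs j)) = w i (xs i) * ∏ j ∈ univ.erase i, w j (xs j) from
      (Finset.mul_prod_erase univ _ (mem_univ i)).symm]
    rw [show (∏ j, (if j = i then w j (xs j) * f i (xs j) else w j (xs j)))
        = (if i = i then w i (xs i) * f i (xs i) else w i (xs i)) *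
          ∏ j ∈ univ.erase i, (if j = i then w j (xs j) * f i (xs j) else w j (xs j)) from
      (Finset.mul_prod_erase univ _ (mem_univ i)).symm]
    rw [if_pos rfl,
      Finset.prod_congr rfl (fun j hj => if_neg (Finset.ne_of_mem_erase hj))]
    ring
  simp_rw [h1]
  rw [IO_sum_prod_pi (fun j y => if j = i then w j y * f i y else w j y)]
  rw [Finset.prod_eq_single i (fun j _ hj => by simp [if_neg hj, hw j])
    (fun h => absurd (mem_univ i) h)]
  simp

lemma IO_merge {A B C : Type*} [Fintype A] [Fintype B] [Fintype C] {n : ℕ}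
    (H : (Fin n → A) → (Fin n → B) → (Fin n → C) → ℝ) :
    ∑ as : Fin n → A, ∑ bs : Fin n → B, ∑ cs : Fin n → C, H as bs cs
      = ∑ zs : Fin n → A × B × C,
          H (fun t => (zs t).1) (fun t => (zs t).2.1) (fun t => (zs t).2.2) := by
  let e : (Fin n → A × B × C) ≃ (Fin n → A) × (Fin n → B) × (Fin n → C) :=
    (Equiv.arrowProdEquivProdArrow (Fin n) (fun _ => A) (fun _ => B × C)).trans
      ((Equiv.refl _).prodCongr (Equiv.arrowProdEquivProdArrow (Fin n) (fun _ => B) (fun _ => C)))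
  have h := Equiv.sum_comp e
    (fun p : (Fin n → A) × (Fin n → B) × (Fin n → C) => H p.1 p.2.1 p.2.2)
  rw [Fintype.sum_prod_type] at h
  simp_rw [Fintype.sum_prod_type] at h
  exact h.symm

lemma IO_main {Z : Type*} [Fintype Z] {n : ℕ} (hn : 0 < n) (W F : Fin n → Z → ℝ)
    (hW : ∀ t, ∑ z, W t z = 1) (R : ℝ) (hWF : ∀ t, ∑ z, W t z * F t z = R) :
    ∑ zs : Fin n → Z, (∏ t, W t (zs t)) * ((1 / (n : ℝ)) * ∑ t, F t (zs t)) = R := by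
  have h1 : ∀ zs : Fin n → Z, (∏ t, W t (zs t)) * ((1 / (n : ℝ)) * ∑ t, F t (zs t))
      = (1 / (n : ℝ)) * ((∏ t, W t (zs t)) * ∑ t, F t (zs t)) := fun zs => by ring
  simp_rw [h1]
  rw [← Finset.mul_sum, IO_key W hW univ F]
  simp_rw [hWF]
  rw [Finset.sum_const, card_univ, Fintype.card_fin, nsmul_eq_mul]
  have : (n : ℝ) ≠ 0 := Nat.cast_ne_zero.mpr hn.ne'
  field_simp





/-- (Unbiasedness of the intervention-oblivious estimator.)
Over `T` timesteps with logging policies `π_1, …, π_T` (interventions may occur), assuming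
`E_ȳ[α_d | π_t, q] ≠ 0` for every timestep `t`, query `q`, and item `d ∈ D_q`, the expected
value of the estimated reward
`R̂_IO(π | D) = (1/T) Σ_t Σ_{d ∈ D_{q_t}} λ(d | q_t)·(c_t(d) − E_ȳ[β_d | π_t, q_t]) / E_ȳ[α_d | π_t, q_t]`,
taken over the i.i.d. queries `q_t ~ P`, the rankings `ȳ_t ~ π_t(·|q_t)`, and the clicks
`c_t` (each item `d` clicked independently with probability `α(d,ȳ_t,q_t)·r(d,q_t) + β(d,ȳ_t,q_t)`),
equals the true reward `R(π) = Σ_q P(q) Σ_{d ∈ D_q} λ(d | q)·r(d,q)`. -/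
theorem intervention_oblivious_estimator_unbiased
    {Q D Y : Type*} [Fintype Q] [Fintype D] [DecidableEq D] [Fintype Y]
    (T : ℕ) (hT : 0 < T)
    (P : Q → ℝ) (hP0 : ∀ q, 0 ≤ P q) (hP1 : ∑ q, P q = 1)
    (Dq : Q → Finset D)
    (π : Fin T → Q → Y → ℝ)
    (hπ0 : ∀ t q y, 0 ≤ π t q y) (hπ1 : ∀ t q, ∑ y, π t q y = 1)
    (α β : D → Y → Q → ℝ) (r : D → Q → ℝ)
    (hr : ∀ d q, 0 ≤ r d q ∧ r d q ≤ 1)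
    (hclick : ∀ d y q,
      0 ≤ α d y q * r d q + β d y q ∧ α d y q * r d q + β d y q ≤ 1)
    (lam : D → Q → ℝ)
    (hα : ∀ (t : Fin T) (q : Q), ∀ d ∈ Dq q, ∑ y, π t q y * α d y q ≠ 0) :
    -- expectation over queries qs, displayed rankings ys, and clicks cs
    (∑ qs : Fin T → Q, ∑ ys : Fin T → Y, ∑ cs : Fin T → D → Bool,
      (∏ t, (P (qs t) * π t (qs t) (ys t) *
          ∏ d, (if cs t d
                then α d (ys t) (qs t) * r d (qs t) + β d (ys t) (qs t)
                else 1 - (α d (ys t) (qs t) * r d (qs t) + β d (ys t) (qs t))))) *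
        -- the intervention-oblivious estimate of the reward
        ((1 / (T : ℝ)) * ∑ t, ∑ d ∈ Dq (qs t),
          lam d (qs t) *
            (((if cs t d then (1 : ℝ) else 0) - ∑ y, π t (qs t) y * β d y (qs t)) /
              (∑ y, π t (qs t) y * α d y (qs t)))))
      -- equals the true reward
      = ∑ q, P q * ∑ d ∈ Dq q, lam d q * r d q := by
  classical
  rw [IO_merge (fun (qs : Fin T → Q) (ys : Fin T → Y) (cs : Fin T → D → Bool) =>
      (∏ t, (P (qs t) * π t (qs t) (ys t) *
          ∏ d, (if cs t d
                then α d (ys t) (qs t) * r d (qs t) + β d (ys t) (qs t)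
                else 1 - (α d (ys t) (qs t) * r d (qs t) + β d (ys t) (qs t))))) *
        ((1 / (T : ℝ)) * ∑ t, ∑ d ∈ Dq (qs t),
          lam d (qs t) *
            (((if cs t d then (1 : ℝ) else 0) - ∑ y, π t (qs t) y * β d y (qs t)) /
              (∑ y, π t (qs t) y * α d y (qs t)))))]
  -- Bernoulli normalization
  have hbern1 : ∀ (d : D) (y : Y) (q : Q),
      ∑ b : Bool, (if b then α d y q * r d q + β d y q
          else 1 - (α d y q * r d q + β d y q)) = 1 := by
    intro d y q; rw [Fintype.sum_bool]; simp
  have hc : ∀ (q : Q) (y : Y),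
      ∑ c : D → Bool, ∏ d, (if c d then α d y q * r d q + β d y q
          else 1 - (α d y q * r d q + β d y q)) = 1 := by
    intro q y
    refine Eq.trans (IO_sum_prod_pi (fun (d : D) (b : Bool) =>
        if b then α d y q * r d q + β d y q
          else 1 - (α d y q * r d q + β d y q))) ?_
    exact Finset.prod_eq_one fun d _ => hbern1 d y q
  -- W sums to 1
  have hW : ∀ t : Fin T, ∑ z : Q × Y × (D → Bool),
      P z.1 * π t z.1 z.2.1 *
        ∏ d, (if z.2.2 d then α d z.2.1 z.1 * r d z.1 + β d z.2.1 z.1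
              else 1 - (α d z.2.1 z.1 * r d z.1 + β d z.2.1 z.1)) = 1 := by
    intro t
    simp only [Fintype.sum_prod_type]
    have h1 : ∀ (q : Q) (y : Y),
        ∑ c : D → Bool, P q * π t q y *
          ∏ d, (if c d then α d y q * r d q + β d y q
              else 1 - (α d y q * r d q + β d y q)) = P q * π t q y := by
      intro q y; rw [← Finset.mul_sum, hc q y, mul_one]
    simp_rw [h1, ← Finset.mul_sum, hπ1, mul_one]
    exact hP1
  -- per-item algebra
  have halg : ∀ (t : Fin T) (q : Q), ∀ d ∈ Dq q,
      ∑ y, π t q y * (∑ b : Bool,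
        (if b then α d y q * r d q + β d y q
            else 1 - (α d y q * r d q + β d y q)) *
        (lam d q * (((if b then (1 : ℝ) else 0) - ∑ y', π t q y' * β d y' q) /
              (∑ y', π t q y' * α d y' q))))
      = lam d q * r d q := by
    intro t q d hd
    have hA : (∑ y', π t q y' * α d y' q) ≠ 0 := hα t q d hd
    simp only [Fintype.sum_bool, if_true, if_false]
    calc ∑ y, π t q y *
          ((α d y q * r d q + β d y q) *
              (lam d q * ((1 - ∑ y', π t q y' * β d y' q) / ∑ y', π t q y' * α d y' q)) +
            (1 - (α d y q * r d q + β d y q)) *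
              (lam d q * ((0 - ∑ y', π t q y' * β d y' q) / ∑ y', π t q y' * α d y' q)))
        = ∑ y, ((π t q y * α d y q) *
              (lam d q * r d q / ∑ y', π t q y' * α d y' q) +
            (π t q y * β d y q) * (lam d q / ∑ y', π t q y' * α d y' q) -
            π t q y * (lam d q * (∑ y', π t q y' * β d y' q) /
              ∑ y', π t q y' * α d y' q)) :=
          Finset.sum_congr rfl fun y _ => by ring
      _ = (∑ y, π t q y * α d y q) *
              (lam d q * r d q / ∑ y', π t q y' * α d y' q) +
            (∑ y, π t q y * β d y q) * (lam d q / ∑ y', π t q y' * α d y' q) -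
            (∑ y, π t q y) * (lam d q * (∑ y', π t q y' * β d y' q) /
              ∑ y', π t q y' * α d y' q) := by
          rw [Finset.sum_sub_distrib, Finset.sum_add_distrib,
            Finset.sum_mul, Finset.sum_mul, Finset.sum_mul]
      _ = lam d q * r d q := by
          rw [hπ1]
          field_simp
          ring
  -- per-timestep expectation
  have hWF : ∀ t : Fin T, ∑ z : Q × Y × (D → Bool),
      (P z.1 * π t z.1 z.2.1 *
        ∏ d, (if z.2.2 d then α d z.2.1 z.1 * r d z.1 + β d z.2.1 z.1
              else 1 - (α d z.2.1 z.1 * r d z.1 + β d z.2.1 z.1))) *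
      (∑ d ∈ Dq z.1, lam d z.1 *
          (((if z.2.2 d then (1 : ℝ) else 0) - ∑ y, π t z.1 y * β d y z.1) /
            (∑ y, π t z.1 y * α d y z.1)))
      = ∑ q, P q * ∑ d ∈ Dq q, lam d q * r d q := by
    intro t
    simp only [Fintype.sum_prod_type]
    refine Finset.sum_congr rfl fun q _ => ?_
    have hstep : ∀ y : Y,
        ∑ c : D → Bool, (P q * π t q y *
            ∏ d, (if c d then α d y q * r d q + β d y q
                  else 1 - (α d y q * r d q + β d y q))) *
          (∑ d ∈ Dq q, lam d q *
              (((if c d then (1 : ℝ) else 0) - ∑ y', π t q y' * β d y' q) /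
                (∑ y', π t q y' * α d y' q)))
        = P q * (π t q y * ∑ d ∈ Dq q, ∑ b : Bool,
            (if b then α d y q * r d q + β d y q
                else 1 - (α d y q * r d q + β d y q)) *
            (lam d q * (((if b then (1 : ℝ) else 0) - ∑ y', π t q y' * β d y' q) /
                  (∑ y', π t q y' * α d y' q)))) := by
      intro y
      have hkey : (∑ c : D → Bool,
            (∏ d, (if c d then α d y q * r d q + β d y q
                  else 1 - (α d y q * r d q + β d y q))) *
            (∑ d ∈ Dq q, lam d q *
              (((if c d then (1 : ℝ) else 0) - ∑ y', π t q y' * β d y' q) /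
                (∑ y', π t q y' * α d y' q))))
          = ∑ d ∈ Dq q, ∑ b : Bool,
            (if b then α d y q * r d q + β d y q
                else 1 - (α d y q * r d q + β d y q)) *
            (lam d q * (((if b then (1 : ℝ) else 0) - ∑ y', π t q y' * β d y' q) /
                  (∑ y', π t q y' * α d y' q))) :=
        IO_key (fun (d : D) (b : Bool) =>
            if b then α d y q * r d q + β d y q
              else 1 - (α d y q * r d q + β d y q))
          (fun d => hbern1 d y q) (Dq q)
          (fun (d : D) (b : Bool) => lam d q *
            (((if b then (1 : ℝ) else 0) - ∑ y', π t q y' * β d y' q) /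
              (∑ y', π t q y' * α d y' q)))
      calc _ = P q * (π t q y * ∑ c : D → Bool,
            (∏ d, (if c d then α d y q * r d q + β d y q
                  else 1 - (α d y q * r d q + β d y q))) *
            (∑ d ∈ Dq q, lam d q *
              (((if c d then (1 : ℝ) else 0) - ∑ y', π t q y' * β d y' q) /
                (∑ y', π t q y' * α d y' q)))) := by
            rw [Finset.mul_sum, Finset.mul_sum]
            exact Finset.sum_congr rfl fun c _ => by ring
        _ = _ := by rw [hkey]
    simp_rw [hstep, ← Finset.mul_sum]
    congr 1
    calc ∑ y, π t q y * ∑ d ∈ Dq q, ∑ b : Bool,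
          (if b then α d y q * r d q + β d y q
              else 1 - (α d y q * r d q + β d y q)) *
          (lam d q * (((if b then (1 : ℝ) else 0) - ∑ y', π t q y' * β d y' q) /
                (∑ y', π t q y' * α d y' q)))
        = ∑ d ∈ Dq q, ∑ y, π t q y * ∑ b : Bool,
          (if b then α d y q * r d q + β d y q
              else 1 - (α d y q * r d q + β d y q)) *
          (lam d q * (((if b then (1 : ℝ) else 0) - ∑ y', π t q y' * β d y' q) /
                (∑ y', π t q y' * α d y' q))) := by
          simp_rw [Finset.mul_sum]; exact Finset.sum_comm
      _ = ∑ d ∈ Dq q, lam d q * r d q :=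
          Finset.sum_congr rfl fun d hd => halg t q d hd
  exact IO_main hT
    (fun (t : Fin T) (z : Q × Y × (D → Bool)) => P z.1 * π t z.1 z.2.1 *
        ∏ d, (if z.2.2 d then α d z.2.1 z.1 * r d z.1 + β d z.2.1 z.1
              else 1 - (α d z.2.1 z.1 * r d z.1 + β d z.2.1 z.1)))
    (fun (t : Fin T) (z : Q × Y × (D → Bool)) => ∑ d ∈ Dq z.1, lam d z.1 *
          (((if z.2.2 d then (1 : ℝ) else 0) - ∑ y, π t z.1 y * β d y z.1) /
            (∑ y, π t z.1 y * α d y z.1)))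
    hW _ hWF
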